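/- Let X be a mean-zero random variable taking values in [−1, 1], let p be any real polynomial of degree at most d, and suppose Y ∈ {±1}. If h(x) = sign(p(x) − t) for some threshold t ∈ [−1,1] chosen uniformly at random, then E_t[1[h(X) ≠ Y]] ≤ (1/2)·|Y − p(X)|, and hence there exists a fixed threshold t achieving (1/N)·Σⱼ 1[sign(p(xʲ) − t) ≠ yʲ] ≤ (1/(2N))·Σⱼ |yʲ − p(xʲ)| on any finite sample {(xʲ, yʲ)}ⱼ₌₁^N with yʲ ∈ {±1}. -/

import Mathlib

open MeasureTheory Real Finset

lemma err_eq_indicator (v y : ℝ) (hy : y = 1 ∨ y = -1) :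
    (fun t : ℝ => if (if 0 ≤ v - t then (1:ℝ) else -1) ≠ y then (1:ℝ) else 0) =
      (if y = 1 then Set.Ioi v else Set.Iic v).indicator (fun _ => (1:ℝ)) := by
  have e1 : ¬(-1:ℝ) = 1 := by norm_num
  have e2 : ¬(1:ℝ) = -1 := by norm_num
  rcases hy with hy | hy <;> subst hy <;> funext t <;> by_cases h : 0 ≤ v - t
  · have htv : t ≤ v := by linarith
    simp [Set.indicator, h, not_lt.2 htv, e1, e2]
  · have htv : v < t := by push_neg at h; linarith
    simp [Set.indicator, h, htv, e1, e2]
  · have htv : t ≤ v := by linarith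
    simp [Set.indicator, h, htv, e1, e2]
  · have htv : v < t := by push_neg at h; linarith
    simp [Set.indicator, h, not_le.2 htv, e1, e2]

lemma err_integrable (v y : ℝ) (hy : y = 1 ∨ y = -1) :
    IntegrableOn (fun t : ℝ => if (if 0 ≤ v - t then (1:ℝ) else -1) ≠ y then (1:ℝ) else 0)
      (Set.Icc (-1) 1) := by
  rw [err_eq_indicator v y hy]
  apply Integrable.indicator
  · exact integrableOn_const (by simp [Real.volume_Icc])
  · split
    · exact measurableSet_Ioi
    · exact measurableSet_Iic

lemma err_integral_le (v y : ℝ) (hy : y = 1 ∨ y = -1) :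
    ∫ t in Set.Icc (-1:ℝ) 1,
      (if (if 0 ≤ v - t then (1:ℝ) else -1) ≠ y then (1:ℝ) else 0) ≤ |y - v| := by
  rw [err_eq_indicator v y hy]
  rcases hy with hy | hy <;> subst hy
  · rw [if_pos rfl, setIntegral_indicator measurableSet_Ioi, setIntegral_const, smul_eq_mul,
      mul_one]
    have hsub : Set.Icc (-1:ℝ) 1 ∩ Set.Ioi v ⊆ Set.Icc (max (-1) v) 1 := by
      rintro x ⟨⟨h1, h2⟩, h3⟩
      exact ⟨max_le h1 h3.le, h2⟩
    calc (volume (Set.Icc (-1:ℝ) 1 ∩ Set.Ioi v)).toReal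
        ≤ (volume (Set.Icc (max (-1:ℝ) v) 1)).toReal :=
          ENNReal.toReal_mono (by simp [Real.volume_Icc]) (measure_mono hsub)
      _ ≤ |1 - v| := by
          rw [Real.volume_Icc, ENNReal.toReal_ofReal']
          rcases le_total (1 - max (-1:ℝ) v) 0 with h0 | h0
          · rw [max_eq_right h0]; exact abs_nonneg _
          · rw [max_eq_left h0]
            have habs := le_abs_self (1 - v)
            rcases le_total (-1:ℝ) v with h | h
            · rw [max_eq_right h]; linarith
            · rw [max_eq_left h]; linarith
  · rw [if_neg (by norm_num : ¬(-1:ℝ) = 1), setIntegral_indicator measurableSet_Iic,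
      setIntegral_const, smul_eq_mul, mul_one]
    have hsub : Set.Icc (-1:ℝ) 1 ∩ Set.Iic v ⊆ Set.Icc (-1) (min 1 v) := by
      rintro x ⟨⟨h1, h2⟩, h3⟩
      exact ⟨h1, le_min h2 h3⟩
    calc (volume (Set.Icc (-1:ℝ) 1 ∩ Set.Iic v)).toReal
        ≤ (volume (Set.Icc (-1:ℝ) (min 1 v))).toReal :=
          ENNReal.toReal_mono (by simp [Real.volume_Icc]) (measure_mono hsub)
      _ ≤ |(-1) - v| := by
          rw [Real.volume_Icc, ENNReal.toReal_ofReal']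
          rcases le_total (min 1 v - (-1:ℝ)) 0 with h0 | h0
          · rw [max_eq_right h0]; exact abs_nonneg _
          · rw [max_eq_left h0]
            have habs := neg_le_abs ((-1) - v)
            rcases le_total (1:ℝ) v with h | h
            · rw [min_eq_left h]; linarith
            · rw [min_eq_right h]; linarith

/-- Randomized-threshold rounding for L₁ polynomial regression: for `y ∈ {±1}` and any
real value `v`, the probability over a uniform threshold `t ∈ [-1,1]` that
`sign(v - t) ≠ y` is at most `|y - v|/2`; consequently, on any finite sample with
labels `yⱼ ∈ {±1}` and predicted values `vⱼ = p(xʲ)`, some fixed threshold `t ∈ [-1,1]`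
achieves empirical 0-1 error at most `(1/(2N))·Σⱼ |yⱼ - vⱼ|`. -/
theorem stmt_19 :
    (∀ v y : ℝ, (y = 1 ∨ y = -1) →
      (1 / 2) * (∫ t in Set.Icc (-1:ℝ) 1,
          (if (if 0 ≤ v - t then (1:ℝ) else -1) ≠ y then (1:ℝ) else 0)) ≤
        |y - v| / 2) ∧
    (∀ (N : ℕ), 0 < N → ∀ (v y : Fin N → ℝ), (∀ j, y j = 1 ∨ y j = -1) →
      ∃ t : ℝ, t ∈ Set.Icc (-1:ℝ) 1 ∧
        (1 / (N : ℝ)) * (∑ j, if (if 0 ≤ v j - t then (1:ℝ) else -1) ≠ y j then (1:ℝ) else 0) ≤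
          (1 / (2 * (N : ℝ))) * ∑ j, |y j - v j|) := by
  constructor
  · intro v y hy
    have := err_integral_le v y hy
    linarith
  · intro N hN v y hy
    set F : ℝ → ℝ := fun t => ∑ j, if (if 0 ≤ v j - t then (1:ℝ) else -1) ≠ y j then (1:ℝ) else 0
      with hF
    have hint : IntegrableOn F (Set.Icc (-1:ℝ) 1) :=
      integrable_finset_sum _ fun j _ => err_integrable (v j) (y j) (hy j)
    have hvol : volume (Set.Icc (-1:ℝ) 1) = ENNReal.ofReal 2 := by
      rw [Real.volume_Icc]; norm_num
    obtain ⟨t, ht, hle⟩ := exists_le_setAverage (μ := volume) (s := Set.Icc (-1:ℝ) 1)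
      (by simp [hvol]) (by simp [hvol]) hint
    refine ⟨t, ht, ?_⟩
    have hFt : F t ≤ (1/2) * ∑ j, |y j - v j| := by
      have havg : ⨍ a in Set.Icc (-1:ℝ) 1, F a ≤ (1/2) * ∑ j, |y j - v j| := by
        rw [setAverage_eq, measureReal_def, hvol]
        have hI : ∫ a in Set.Icc (-1:ℝ) 1, F a ≤ ∑ j, |y j - v j| := by
          rw [hF, integral_finset_sum _ fun j _ => err_integrable (v j) (y j) (hy j)]
          exact Finset.sum_le_sum fun j _ => err_integral_le (v j) (y j) (hy j)
        rw [ENNReal.toReal_ofReal (by norm_num), smul_eq_mul]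
        nlinarith
      exact hle.trans havg
    have hN' : (0:ℝ) < N := by exact_mod_cast hN
    calc (1 / (N:ℝ)) * F t ≤ (1 / (N:ℝ)) * ((1/2) * ∑ j, |y j - v j|) :=
          mul_le_mul_of_nonneg_left hFt (by positivity)
      _ = (1 / (2 * (N:ℝ))) * ∑ j, |y j - v j| := by
          rw [← mul_assoc, div_mul_div_comm, one_mul, mul_comm (N:ℝ) 2]
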